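/- Let N ≥ 1 and let Φ : ℕ → ℕ → Matrix (Fin N) (Fin N) ℝ satisfy: (i) there exists M > 0 with ‖Φ(j,i)‖ ≤ M for all j ≥ i; (ii) for every i ∈ ℕ, the limit lim_{k→∞} Φ(k,i) exists. Let ω : ℕ → ℝ^N satisfy ∑_{i=0}^{∞} ‖ω[i]‖ < ∞, and let v ∈ ℝ^N. Then the sequence k ↦ Φ(k,0) v + ∑_{i=0}^{k−1} Φ(k,i) ω[i] converges in ℝ^N as k → ∞. -/

import Mathlib

open Filter Matrix

attribute [local instance] Matrix.frobeniusNormedAddCommGroup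


lemma entry_le_frob {N : ℕ} (A : Matrix (Fin N) (Fin N) ℝ) (i j : Fin N) :
    ‖A i j‖ ≤ ‖A‖ := by
  rw [Matrix.frobenius_norm_def]
  have h : ‖A i j‖ ^ (2:ℝ) ≤ ∑ i', ∑ j', ‖A i' j'‖ ^ (2:ℝ) := by
    calc ‖A i j‖ ^ (2:ℝ) ≤ ∑ j', ‖A i j'‖ ^ (2:ℝ) :=
          Finset.single_le_sum (f := fun j' => ‖A i j'‖ ^ (2:ℝ))
            (fun j' _ => by positivity) (Finset.mem_univ j)
      _ ≤ ∑ i', ∑ j', ‖A i' j'‖ ^ (2:ℝ) :=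
          Finset.single_le_sum (f := fun i' => ∑ j', ‖A i' j'‖ ^ (2:ℝ))
            (fun i' _ => Finset.sum_nonneg fun _ _ => by positivity)
            (Finset.mem_univ i)
  calc ‖A i j‖ = (‖A i j‖ ^ (2:ℝ)) ^ (1/2 : ℝ) := by
        rw [← Real.rpow_mul (norm_nonneg _)]
        norm_num
    _ ≤ (∑ i', ∑ j', ‖A i' j'‖ ^ (2:ℝ)) ^ (1/2:ℝ) :=
        Real.rpow_le_rpow (by positivity) h (by norm_num)

lemma mulVec_norm_le {N : ℕ} (A : Matrix (Fin N) (Fin N) ℝ) (x : Fin N → ℝ) :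
    ‖A.mulVec x‖ ≤ N * ‖A‖ * ‖x‖ := by
  have hA : (0:ℝ) ≤ ‖A‖ := norm_nonneg _
  have hx : (0:ℝ) ≤ ‖x‖ := norm_nonneg _
  apply pi_norm_le_iff_of_nonneg (by positivity) |>.2
  intro j
  have hj : A.mulVec x j = ∑ i, A j i * x i := rfl
  rw [hj]
  calc ‖∑ i, A j i * x i‖ ≤ ∑ i, ‖A j i * x i‖ := norm_sum_le _ _
    _ ≤ ∑ i : Fin N, ‖A‖ * ‖x‖ := by
        apply Finset.sum_le_sum
        intro i _
        rw [norm_mul]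
        exact mul_le_mul (entry_le_frob A j i) (norm_le_pi_norm x i) (norm_nonneg _) hA
    _ = N * ‖A‖ * ‖x‖ := by simp [Finset.sum_const, mul_assoc]

lemma tendsto_mulVec {N : ℕ} {A : ℕ → Matrix (Fin N) (Fin N) ℝ}
    {L : Matrix (Fin N) (Fin N) ℝ} (h : Tendsto A atTop (nhds L)) (x : Fin N → ℝ) :
    Tendsto (fun k => (A k).mulVec x) atTop (nhds (L.mulVec x)) := by
  replace h := tendsto_iff_norm_sub_tendsto_zero.1 h
  rw [tendsto_iff_norm_sub_tendsto_zero]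
  apply squeeze_zero (fun k => norm_nonneg _)
    (g := fun k => N * ‖A k - L‖ * ‖x‖)
    (fun k => by rw [← Matrix.sub_mulVec]; exact mulVec_norm_le _ _)
  have := (h.const_mul (N:ℝ)).mul_const ‖x‖
  simpa using this


/-- **Cauchy-type convergence of the variation-of-constants formula (discrete time).**
If the transition matrices `Φ(j,i)` are uniformly bounded and convergent as `j → ∞` for each
fixed `i`, and `∑ᵢ ‖ω[i]‖ < ∞`, then `k ↦ Φ(k,0)v + ∑_{i=0}^{k−1} Φ(k,i)ω[i]` converges. -/
theorem discrete_variation_of_constants_convergence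
    (N : ℕ) (hN : 1 ≤ N)
    (Φ : ℕ → ℕ → Matrix (Fin N) (Fin N) ℝ)
    (hbdd : ∃ M : ℝ, 0 < M ∧ ∀ j i : ℕ, i ≤ j → ‖Φ j i‖ ≤ M)
    (hlim : ∀ i : ℕ, ∃ Λ : Matrix (Fin N) (Fin N) ℝ, Tendsto (fun k => Φ k i) atTop (nhds Λ))
    (ω : ℕ → Fin N → ℝ) (hω : Summable fun i => ‖ω i‖)
    (v : Fin N → ℝ) :
    ∃ w : Fin N → ℝ,
      Tendsto (fun k : ℕ => (Φ k 0).mulVec v + ∑ i ∈ Finset.range k, (Φ k i).mulVec (ω i))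
        atTop (nhds w) := by
  obtain ⟨M, hM, hMb⟩ := hbdd
  choose Λ hΛ using hlim
  set F : ℕ → ℕ → (Fin N → ℝ) := fun k i => if i < k then (Φ k i).mulVec (ω i) else 0 with hF
  have hsum : Tendsto (fun k => ∑' i, F k i) atTop (nhds (∑' i, (Λ i).mulVec (ω i))) := by
    apply tendsto_tsum_of_dominated_convergence (bound := fun i => N * M * ‖ω i‖)
      (hω.mul_left (N * M))
    · intro i
      apply (tendsto_mulVec (hΛ i) (ω i)).congr'
      filter_upwards [eventually_ge_atTop (i+1)] with k hk
      simp [hF, Nat.lt_of_succ_le hk]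
    · filter_upwards with k i
      by_cases h : i < k
      · simp only [hF, if_pos h]
        calc ‖(Φ k i).mulVec (ω i)‖ ≤ N * ‖Φ k i‖ * ‖ω i‖ := mulVec_norm_le _ _
          _ ≤ N * M * ‖ω i‖ := by
              have h1 := hMb k i h.le
              gcongr
      · simp only [hF, if_neg h, norm_zero]
        positivity
  have heq : ∀ k, ∑' i, F k i = ∑ i ∈ Finset.range k, (Φ k i).mulVec (ω i) := by
    intro k
    rw [tsum_eq_sum (s := Finset.range k)]
    · exact Finset.sum_congr rfl fun i hi => by simp [hF, Finset.mem_range.1 hi]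
    · intro i hi
      simp only [hF]
      rw [if_neg (fun h => hi (Finset.mem_range.2 h))]
  refine ⟨(Λ 0).mulVec v + ∑' i, (Λ i).mulVec (ω i), ?_⟩
  exact (tendsto_mulVec (hΛ 0) v).add ((funext heq : (fun k => ∑' i, F k i) = _) ▸ hsum)
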